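/- Let k ≥ 0 be an integer and suppose f, f', …, f^{(k−1)} are absolutely continuous on [a,b] with V_k := ∫_0^π |f^{(k+1)}(G(cos θ))| dθ < ∞, where G(t) = a + (b−a)(t+1)/2. Then for j ≥ k+1 the Chebyshev coefficients c_j of f∘G satisfy: if k = 2s, |c_j| ≤ ((b−a)/2)^{2s+1} · 2V_k / (π ∏_{i=−s}^{s} (j + 2i)); if k = 2s+1, |c_j| ≤ ((b−a)/2)^{2s+2} · 2V_k / (π ∏_{i=−s}^{s+1} (j + 2i − 1)). -/

import Mathlib

open Real Set MeasureTheory intervalIntegral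

lemma cheb_gmem {a b : ℝ} (hab : a ≤ b) (θ : ℝ) :
    a + (b - a) / 2 * (Real.cos θ + 1) ∈ Icc a b := by
  have h1 := Real.neg_one_le_cos θ
  have h2 := Real.cos_le_one θ
  constructor <;> nlinarith

lemma cheb_gderiv (a b θ : ℝ) :
    HasDerivAt (fun θ : ℝ => a + (b - a) / 2 * (Real.cos θ + 1))
      ((b - a) / 2 * (-Real.sin θ)) θ := by
  have h := ((Real.hasDerivAt_cos θ).add_const 1).const_mul ((b - a) / 2)
  simpa using h.const_add a

lemma cheb_compDeriv {a b : ℝ} (hab : a ≤ b) {f : ℝ → ℝ}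
    (hf : DifferentiableOn ℝ f (Icc a b)) (θ : ℝ) :
    HasDerivAt (fun θ : ℝ => f (a + (b - a) / 2 * (Real.cos θ + 1)))
      (((b - a) / 2 * (-Real.sin θ)) *
        derivWithin f (Icc a b) (a + (b - a) / 2 * (Real.cos θ + 1))) θ := by
  have hg := (hf _ (cheb_gmem hab θ)).hasDerivWithinAt
  have := hg.scomp_hasDerivAt θ (cheb_gderiv a b θ) (cheb_gmem hab)
  simpa [Function.comp_def, smul_eq_mul] using this

lemma cheb_sinj (j : ℕ) (hj : 1 ≤ j) (θ : ℝ) :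
    HasDerivAt (fun θ : ℝ => Real.sin ((j : ℝ) * θ) / j) (Real.cos ((j : ℝ) * θ)) θ := by
  have hj' : (j : ℝ) ≠ 0 := Nat.cast_ne_zero.2 (by omega)
  have h1 : HasDerivAt (fun θ : ℝ => (j : ℝ) * θ) (j : ℝ) θ := by
    simpa using (hasDerivAt_id θ).const_mul (j : ℝ)
  have h2 := ((Real.hasDerivAt_sin ((j : ℝ) * θ)).comp θ h1).div_const (j : ℝ)
  have h3 : Real.cos ((j : ℝ) * θ) * (j : ℝ) / (j : ℝ) = Real.cos ((j : ℝ) * θ) := by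
    field_simp
  rw [h3] at h2
  exact h2

lemma cheb_parts {a b : ℝ} (hab : a ≤ b) {f : ℝ → ℝ}
    (hf : DifferentiableOn ℝ f (Icc a b))
    (hint : IntervalIntegrable
      (fun θ : ℝ => derivWithin f (Icc a b) (a + (b - a) / 2 * (Real.cos θ + 1)))
      volume 0 π)
    (j : ℕ) (hj : 1 ≤ j) :
    ∫ θ in (0:ℝ)..π, f (a + (b - a) / 2 * (Real.cos θ + 1)) * Real.cos ((j : ℝ) * θ) =
      ((b - a) / 2) / j * ∫ θ in (0:ℝ)..π,
        derivWithin f (Icc a b) (a + (b - a) / 2 * (Real.cos θ + 1)) *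
          (Real.sin θ * Real.sin ((j : ℝ) * θ)) := by
  have hj' : (j : ℝ) ≠ 0 := Nat.cast_ne_zero.2 (by omega)
  set u : ℝ → ℝ := fun θ => f (a + (b - a) / 2 * (Real.cos θ + 1)) with hu
  set u' : ℝ → ℝ := fun θ => ((b - a) / 2 * (-Real.sin θ)) *
      derivWithin f (Icc a b) (a + (b - a) / 2 * (Real.cos θ + 1)) with hu'
  set v : ℝ → ℝ := fun θ => Real.sin ((j : ℝ) * θ) / j with hv
  have hu'int : IntervalIntegrable u' volume 0 π := by
    have hc : ContinuousOn (fun θ : ℝ => (b - a) / 2 * (-Real.sin θ)) (uIcc (0:ℝ) π) := by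
      fun_prop
    simpa [hu', mul_comm] using hint.mul_continuousOn hc
  have hparts := integral_mul_deriv_eq_deriv_mul
    (u := u) (v := v) (u' := u') (v' := fun θ => Real.cos ((j : ℝ) * θ))
    (fun x _ => cheb_compDeriv hab hf x) (fun x _ => cheb_sinj j hj x)
    hu'int ((Real.continuous_cos.comp (continuous_const.mul continuous_id)).intervalIntegrable 0 π)
  have hv0 : v 0 = 0 := by simp [hv]
  have hvpi : v π = 0 := by
    simp [hv, Real.sin_nat_mul_pi]
  rw [hparts, hv0, hvpi]
  rw [mul_zero, mul_zero, sub_zero, zero_sub, ← intervalIntegral.integral_neg,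
    ← intervalIntegral.integral_const_mul]
  apply intervalIntegral.integral_congr
  intro θ _
  simp only [hu', hv]
  field_simp

lemma cheb_integrable_of_abs {a b : ℝ} (hab : a < b) (h : ℝ → ℝ) (F : ℝ → ℝ)
    (hF : ∀ x ∈ Ioo a b, h x = deriv F x)
    (hVint : IntervalIntegrable
      (fun θ : ℝ => |h (a + (b - a) / 2 * (Real.cos θ + 1))|) volume 0 π) :
    IntervalIntegrable
      (fun θ : ℝ => h (a + (b - a) / 2 * (Real.cos θ + 1))) volume 0 π := by
  have hmemIoo : ∀ θ ∈ Ioo (0:ℝ) π, a + (b - a) / 2 * (Real.cos θ + 1) ∈ Ioo a b := by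
    intro θ hθ
    have h1 : Real.cos θ < Real.cos 0 :=
      Real.strictAntiOn_cos ⟨le_refl 0, Real.pi_pos.le⟩
        ⟨hθ.1.le, hθ.2.le⟩ hθ.1
    have h2 : Real.cos π < Real.cos θ :=
      Real.strictAntiOn_cos ⟨hθ.1.le, hθ.2.le⟩ ⟨Real.pi_pos.le, le_refl π⟩ hθ.2
    rw [Real.cos_zero] at h1
    rw [Real.cos_pi] at h2
    constructor <;> nlinarith
  have hmeas : AEStronglyMeasurable
      (fun θ : ℝ => h (a + (b - a) / 2 * (Real.cos θ + 1)))
      (volume.restrict (Set.uIoc (0:ℝ) π)) := by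
    have hdm : Measurable (deriv F) := measurable_deriv F
    have hgm : Continuous (fun θ : ℝ => a + (b - a) / 2 * (Real.cos θ + 1)) := by
      continuity
    refine ((hdm.comp hgm.measurable).aestronglyMeasurable).congr ?_
    have hI : Set.uIoc (0:ℝ) π = Ioc 0 π := uIoc_of_le Real.pi_pos.le
    have hae : ∀ᵐ θ ∂(volume.restrict (Set.uIoc (0:ℝ) π)), θ ∈ Ioo (0:ℝ) π := by
      rw [hI, ae_restrict_iff' measurableSet_Ioc]
      have hne : ∀ᵐ θ : ℝ, θ ≠ π := by
        rw [ae_iff]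
        simp [volume_singleton (a := π)]
      filter_upwards [hne] with θ hθ hθ'
      exact ⟨hθ'.1, lt_of_le_of_ne hθ'.2 hθ⟩
    filter_upwards [hae] with θ hθ
    exact (hF _ (hmemIoo θ hθ)).symm
  rw [intervalIntegrable_iff] at hVint ⊢
  exact (hVint.mono' hmeas (by filter_upwards with θ; simp [Real.norm_eq_abs]))

lemma cheb_aux {a b : ℝ} (hab : a < b) :
    ∀ (k : ℕ) (f : ℝ → ℝ),
    (∀ i ≤ k, DifferentiableOn ℝ (iteratedDerivWithin i f (Icc a b)) (Icc a b)) →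
    IntervalIntegrable (fun θ : ℝ =>
      |iteratedDerivWithin (k + 1) f (Icc a b) (a + (b - a) / 2 * (Real.cos θ + 1))|)
      volume 0 π →
    ∀ j : ℕ, k + 1 ≤ j →
    |∫ θ in (0:ℝ)..π, f (a + (b - a) / 2 * (Real.cos θ + 1)) * Real.cos ((j : ℝ) * θ)| ≤
      ((b - a) / 2) ^ (k + 1) *
        (∫ θ in (0:ℝ)..π, |iteratedDerivWithin (k + 1) f (Icc a b)
            (a + (b - a) / 2 * (Real.cos θ + 1))|) /
        ∏ i ∈ Finset.range (k + 1), ((j : ℝ) + 2 * i - k) := by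
  have hc : (0:ℝ) < (b - a) / 2 := by linarith
  have hUD : UniqueDiffOn ℝ (Icc a b) := uniqueDiffOn_Icc hab
  intro k
  induction k with
  | zero =>
    intro f hdiff hVint j hj
    simp only [zero_add, Nat.zero_add] at hVint hj ⊢
    simp only [Nat.cast_zero, CharP.cast_eq_zero, sub_zero]
    have hf : DifferentiableOn ℝ f (Icc a b) := by
      simpa using hdiff 0 le_rfl
    have hF : ∀ x ∈ Ioo a b, iteratedDerivWithin 1 f (Icc a b) x =
        deriv (iteratedDerivWithin 0 f (Icc a b)) x := by
      intro x hx
      rw [iteratedDerivWithin_succ]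
      exact derivWithin_of_mem_nhds (Icc_mem_nhds hx.1 hx.2)
    have hint := cheb_integrable_of_abs hab _ _ hF hVint
    have hone : (fun θ : ℝ => derivWithin f (Icc a b) (a + (b - a) / 2 * (Real.cos θ + 1)))
        = fun θ : ℝ => iteratedDerivWithin 1 f (Icc a b)
            (a + (b - a) / 2 * (Real.cos θ + 1)) := by
      funext θ
      exact (congrFun iteratedDerivWithin_one _).symm
    have hint' : IntervalIntegrable
        (fun θ : ℝ => derivWithin f (Icc a b) (a + (b - a) / 2 * (Real.cos θ + 1)))
        volume 0 π := by rw [hone]; exact hint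
    have hparts := cheb_parts hab.le hf hint' j hj
    rw [hparts]
    have hWint : IntervalIntegrable
        (fun θ : ℝ => derivWithin f (Icc a b) (a + (b - a) / 2 * (Real.cos θ + 1)) *
          (Real.sin θ * Real.sin ((j : ℝ) * θ))) volume 0 π := by
      exact hint'.mul_continuousOn
        (Real.continuous_sin.mul (Real.continuous_sin.comp
          (continuous_const.mul continuous_id))).continuousOn
    have hW : |∫ θ in (0:ℝ)..π,
        derivWithin f (Icc a b) (a + (b - a) / 2 * (Real.cos θ + 1)) *
          (Real.sin θ * Real.sin ((j : ℝ) * θ))| ≤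
        ∫ θ in (0:ℝ)..π, |iteratedDerivWithin 1 f (Icc a b)
            (a + (b - a) / 2 * (Real.cos θ + 1))| := by
      refine (intervalIntegral.abs_integral_le_integral_abs Real.pi_pos.le).trans ?_
      apply intervalIntegral.integral_mono_on Real.pi_pos.le hWint.abs hVint
      intro θ _
      have he : derivWithin f (Icc a b) (a + (b - a) / 2 * (Real.cos θ + 1)) =
          iteratedDerivWithin 1 f (Icc a b) (a + (b - a) / 2 * (Real.cos θ + 1)) :=
        (congrFun iteratedDerivWithin_one _).symm
      rw [he, abs_mul, abs_mul]
      have h1 := Real.abs_sin_le_one θ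
      have h2 := Real.abs_sin_le_one ((j : ℝ) * θ)
      have h0 := abs_nonneg (iteratedDerivWithin 1 f (Icc a b)
        (a + (b - a) / 2 * (Real.cos θ + 1)))
      have h3 : |Real.sin θ| * |Real.sin ((j:ℝ)*θ)| ≤ 1 :=
        mul_le_one₀ h1 (abs_nonneg _) h2
      nlinarith [h3, h0]
    -- conclude base case
    have hjpos : (0:ℝ) < j := by exact_mod_cast Nat.lt_of_lt_of_le Nat.zero_lt_one hj
    have hV0 : (0:ℝ) ≤ ∫ θ in (0:ℝ)..π, |iteratedDerivWithin 1 f (Icc a b)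
        (a + (b - a) / 2 * (Real.cos θ + 1))| := by
      apply intervalIntegral.integral_nonneg Real.pi_pos.le
      intro θ _; exact abs_nonneg _
    rw [abs_mul, abs_of_nonneg (by positivity : (0:ℝ) ≤ ((b - a) / 2) / j)]
    simp only [Finset.prod_range_one, Nat.cast_zero, Nat.cast_ofNat, mul_zero, add_zero,
      sub_zero, pow_one]
    calc ((b - a) / 2) / j * |∫ θ in (0:ℝ)..π,
        derivWithin f (Icc a b) (a + (b - a) / 2 * (Real.cos θ + 1)) *
          (Real.sin θ * Real.sin ((j : ℝ) * θ))|
        ≤ ((b - a) / 2) / j * ∫ θ in (0:ℝ)..π, |iteratedDerivWithin 1 f (Icc a b)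
            (a + (b - a) / 2 * (Real.cos θ + 1))| := by
          exact mul_le_mul_of_nonneg_left hW (by positivity)
      _ = (b - a) / 2 * (∫ θ in (0:ℝ)..π, |iteratedDerivWithin 1 f (Icc a b)
            (a + (b - a) / 2 * (Real.cos θ + 1))|) / j := by ring
  | succ k IH =>
    intro f hdiff hVint j hj
    set f₁ := derivWithin f (Icc a b) with hf₁def
    have hEq : ∀ (i : ℕ), ∀ x ∈ Icc a b,
        iteratedDerivWithin i f₁ (Icc a b) x = iteratedDerivWithin (i + 1) f (Icc a b) x :=
      fun i x hx => (congrFun iteratedDerivWithin_succ' x).symm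
    have hdiff₁ : ∀ i ≤ k, DifferentiableOn ℝ (iteratedDerivWithin i f₁ (Icc a b)) (Icc a b) :=
      fun i hi => (hdiff (i + 1) (by omega)).congr (fun x hx => hEq i x hx)
    have habs : (fun θ : ℝ => |iteratedDerivWithin (k + 1) f₁ (Icc a b)
          (a + (b - a) / 2 * (Real.cos θ + 1))|)
        = fun θ : ℝ => |iteratedDerivWithin (k + 1 + 1) f (Icc a b)
          (a + (b - a) / 2 * (Real.cos θ + 1))| :=
      funext fun θ => by rw [hEq (k + 1) _ (cheb_gmem hab.le θ)]
    have hVint₁ : IntervalIntegrable (fun θ : ℝ => |iteratedDerivWithin (k + 1) f₁ (Icc a b)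
        (a + (b - a) / 2 * (Real.cos θ + 1))|) volume 0 π := by
      rw [habs]; exact hVint
    have hIH := IH f₁ hdiff₁ hVint₁
    rw [habs] at hIH
    have hf : DifferentiableOn ℝ f (Icc a b) := by simpa using hdiff 0 (Nat.zero_le _)
    have hcont₁ : ContinuousOn f₁ (Icc a b) := by
      refine ((hdiff 1 (by omega)).continuousOn).congr ?_
      intro x hx
      exact (congrFun iteratedDerivWithin_one x).symm
    have hgcont : Continuous (fun θ : ℝ => a + (b - a) / 2 * (Real.cos θ + 1)) :=
      continuous_const.add (continuous_const.mul (Real.continuous_cos.add continuous_const))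
    have hint' : IntervalIntegrable
        (fun θ : ℝ => f₁ (a + (b - a) / 2 * (Real.cos θ + 1))) volume 0 π := by
      have := hcont₁.comp_continuous hgcont (cheb_gmem hab.le)
      exact this.intervalIntegrable 0 π
    have hj1 : 1 ≤ j := by omega
    have hparts := cheb_parts hab.le hf hint' j hj1
    -- split sin θ * sin (j θ)
    have key : ∀ θ : ℝ, Real.sin θ * Real.sin ((j : ℝ) * θ) =
        (Real.cos (((j : ℝ) - 1) * θ) - Real.cos (((j : ℝ) + 1) * θ)) / 2 := by
      intro θ
      have h := Real.cos_sub_cos (((j : ℝ) - 1) * θ) (((j : ℝ) + 1) * θ)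
      have h1 : ((((j : ℝ) - 1) * θ + ((j : ℝ) + 1) * θ) / 2) = (j : ℝ) * θ := by ring
      have h2 : ((((j : ℝ) - 1) * θ - ((j : ℝ) + 1) * θ) / 2) = -θ := by ring
      rw [h1, h2, Real.sin_neg] at h
      linarith
    have hIa : IntervalIntegrable
        (fun θ : ℝ => f₁ (a + (b - a) / 2 * (Real.cos θ + 1)) *
          Real.cos (((j : ℝ) - 1) * θ)) volume 0 π :=
      hint'.mul_continuousOn
        (Real.continuous_cos.comp (continuous_const.mul continuous_id)).continuousOn
    have hIb : IntervalIntegrable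
        (fun θ : ℝ => f₁ (a + (b - a) / 2 * (Real.cos θ + 1)) *
          Real.cos (((j : ℝ) + 1) * θ)) volume 0 π :=
      hint'.mul_continuousOn
        (Real.continuous_cos.comp (continuous_const.mul continuous_id)).continuousOn
    have hsplit : (∫ θ in (0:ℝ)..π, f₁ (a + (b - a) / 2 * (Real.cos θ + 1)) *
          (Real.sin θ * Real.sin ((j : ℝ) * θ))) =
        ((∫ θ in (0:ℝ)..π, f₁ (a + (b - a) / 2 * (Real.cos θ + 1)) *
            Real.cos (((j : ℝ) - 1) * θ)) -
          (∫ θ in (0:ℝ)..π, f₁ (a + (b - a) / 2 * (Real.cos θ + 1)) *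
            Real.cos (((j : ℝ) + 1) * θ))) / 2 := by
      rw [← intervalIntegral.integral_sub hIa hIb, ← intervalIntegral.integral_div]
      apply intervalIntegral.integral_congr
      intro θ _
      dsimp only
      rw [key θ]
      ring
    -- apply the inductive bounds
    have m1 : ((j - 1 : ℕ) : ℝ) = (j : ℝ) - 1 := by
      have := Nat.cast_sub (R := ℝ) (by omega : 1 ≤ j)
      simpa using this
    have hI1 := hIH (j - 1) (by omega)
    rw [m1] at hI1
    have hI2 := hIH (j + 1) (by omega)
    push_cast at hI2
    -- notation
    set c := (b - a) / 2 with hcdef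
    set V := ∫ θ in (0:ℝ)..π, |iteratedDerivWithin (k + 1 + 1) f (Icc a b)
        (a + c * (Real.cos θ + 1))| with hVdef
    set P₁ := ∏ i ∈ Finset.range (k + 1), ((j : ℝ) - 1 + 2 * i - k) with hP₁def
    set P₂ := ∏ i ∈ Finset.range (k + 1), ((j : ℝ) + 1 + 2 * i - k) with hP₂def
    have hjk : (k : ℝ) + 2 ≤ (j : ℝ) := by exact_mod_cast hj
    have hP₁pos : 0 < P₁ := Finset.prod_pos fun i _ => by
      have : (0:ℝ) ≤ i := Nat.cast_nonneg i
      linarith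
    have hP₂pos : 0 < P₂ := Finset.prod_pos fun i _ => by
      have : (0:ℝ) ≤ i := Nat.cast_nonneg i
      linarith
    set Q := ∏ i ∈ Finset.range (k + 1 + 1), ((j : ℝ) + 2 * i - ((k : ℝ) + 1)) with hQdef
    have hQgoal : (∏ i ∈ Finset.range (k + 1 + 1), ((j : ℝ) + 2 * i - ((k + 1 : ℕ) : ℝ)))
        = Q := Finset.prod_congr rfl fun i _ => by push_cast; ring
    have hQ1 : Q = P₁ * ((j : ℝ) + ((k : ℝ) + 1)) := by
      rw [hQdef, Finset.prod_range_succ]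
      congr 1
      · exact Finset.prod_congr rfl fun i _ => by ring
      · push_cast; ring
    have hQ2 : Q = ((j : ℝ) - ((k : ℝ) + 1)) * P₂ := by
      rw [hQdef, Finset.prod_range_succ']
      rw [mul_comm]
      congr 1
      · push_cast; ring
      · exact Finset.prod_congr rfl fun i _ => by push_cast; ring
    have hQpos : 0 < Q := Finset.prod_pos fun i _ => by
      have : (0:ℝ) ≤ i := Nat.cast_nonneg i
      linarith
    have hV0 : 0 ≤ V := by
      rw [hVdef]
      exact intervalIntegral.integral_nonneg Real.pi_pos.le fun θ _ => abs_nonneg _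
    have hjpos : (0:ℝ) < j := by linarith
    -- final computation
    rw [hparts, hsplit, hQgoal]
    have hXne : (j : ℝ) + ((k : ℝ) + 1) ≠ 0 := by linarith
    have hYne : (j : ℝ) - ((k : ℝ) + 1) ≠ 0 := by linarith
    have e1 : c ^ (k + 1) * V / P₁ = c ^ (k + 1) * V * ((j : ℝ) + ((k : ℝ) + 1)) / Q := by
      rw [hQ1]
      field_simp
    have e2 : c ^ (k + 1) * V / P₂ = c ^ (k + 1) * V * ((j : ℝ) - ((k : ℝ) + 1)) / Q := by
      rw [hQ2]
      field_simp
    calc |c / (j:ℝ) * (((∫ θ in (0:ℝ)..π, f₁ (a + c * (Real.cos θ + 1)) *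
            Real.cos (((j : ℝ) - 1) * θ)) -
          (∫ θ in (0:ℝ)..π, f₁ (a + c * (Real.cos θ + 1)) *
            Real.cos (((j : ℝ) + 1) * θ))) / 2)|
        = c / (2 * (j:ℝ)) * |(∫ θ in (0:ℝ)..π, f₁ (a + c * (Real.cos θ + 1)) *
            Real.cos (((j : ℝ) - 1) * θ)) -
          (∫ θ in (0:ℝ)..π, f₁ (a + c * (Real.cos θ + 1)) *
            Real.cos (((j : ℝ) + 1) * θ))| := by
          rw [abs_mul, abs_of_nonneg (div_nonneg hc.le hjpos.le), abs_div, abs_two]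
          ring
      _ ≤ c / (2 * (j:ℝ)) * (c ^ (k + 1) * V / P₁ + c ^ (k + 1) * V / P₂) := by
          apply mul_le_mul_of_nonneg_left _ (by positivity)
          refine (abs_sub _ _).trans ?_
          exact add_le_add hI1 hI2
      _ = c ^ (k + 1 + 1) * V / Q := by
          rw [e1, e2, ← add_div]
          field_simp
          ring

/-- General decay bound (Theorem 3.1): if `f, f', …, f^{(k-1)}` are absolutely continuous
on `[a,b]` and `V_k = ∫₀^π |f^{(k+1)}(G(cos θ))| dθ < ∞`, then for `j ≥ k+1` the
Chebyshev coefficients of `f` on `[a,b]` satisfy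
`|c_j| ≤ ((b-a)/2)^{2s+1} · 2V_k/(π ∏_{i=-s}^{s}(j+2i))` if `k = 2s` and
`|c_j| ≤ ((b-a)/2)^{2s+2} · 2V_k/(π ∏_{i=-s}^{s+1}(j+2i-1))` if `k = 2s+1`. -/
theorem chebyshev_coeff_decay_general (a b : ℝ) (hab : a < b) (f : ℝ → ℝ) (k s : ℕ)
    (hdiff : ∀ i ≤ k, DifferentiableOn ℝ (iteratedDerivWithin i f (Icc a b)) (Icc a b))
    (V : ℝ)
    (hV : V = ∫ θ in (0:ℝ)..π,
      |iteratedDerivWithin (k + 1) f (Icc a b) (a + (b - a) / 2 * (cos θ + 1))|)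
    (hVint : IntervalIntegrable (fun θ : ℝ =>
      |iteratedDerivWithin (k + 1) f (Icc a b) (a + (b - a) / 2 * (cos θ + 1))|)
      MeasureTheory.volume 0 π) :
    ∀ j : ℕ, k + 1 ≤ j →
      (k = 2 * s →
        |(2 / π) * ∫ θ in (0:ℝ)..π, f (a + (b - a) / 2 * (cos θ + 1)) * cos (j * θ)| ≤
          ((b - a) / 2) ^ (2 * s + 1) * (2 * V) /
            (π * ∏ i ∈ Finset.range (2 * s + 1), ((j : ℝ) + 2 * i - 2 * s))) ∧
      (k = 2 * s + 1 →
        |(2 / π) * ∫ θ in (0:ℝ)..π, f (a + (b - a) / 2 * (cos θ + 1)) * cos (j * θ)| ≤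
          ((b - a) / 2) ^ (2 * s + 2) * (2 * V) /
            (π * ∏ i ∈ Finset.range (2 * s + 2), ((j : ℝ) + 2 * i - 2 * s - 1))) := by
  intro j hj
  have hπ : (0:ℝ) < π := Real.pi_pos
  have hc : (0:ℝ) < (b - a) / 2 := by linarith
  have haux := cheb_aux hab k f hdiff hVint j hj
  rw [← hV] at haux
  have hV0 : 0 ≤ V := by
    rw [hV]
    exact intervalIntegral.integral_nonneg Real.pi_pos.le fun θ _ => abs_nonneg _
  have hjk : (k : ℝ) + 1 ≤ (j : ℝ) := by exact_mod_cast hj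
  have hPpos : 0 < ∏ i ∈ Finset.range (k + 1), ((j : ℝ) + 2 * i - k) :=
    Finset.prod_pos fun i _ => by
      have : (0:ℝ) ≤ i := Nat.cast_nonneg i
      linarith
  have hmain : |(2 / π) * ∫ θ in (0:ℝ)..π, f (a + (b - a) / 2 * (cos θ + 1)) * cos (j * θ)| ≤
      ((b - a) / 2) ^ (k + 1) * (2 * V) /
        (π * ∏ i ∈ Finset.range (k + 1), ((j : ℝ) + 2 * i - k)) := by
    rw [abs_mul, abs_of_nonneg (by positivity : (0:ℝ) ≤ 2 / π)]
    calc 2 / π * |∫ θ in (0:ℝ)..π, f (a + (b - a) / 2 * (cos θ + 1)) * cos (j * θ)|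
        ≤ 2 / π * (((b - a) / 2) ^ (k + 1) * V /
            ∏ i ∈ Finset.range (k + 1), ((j : ℝ) + 2 * i - k)) :=
          mul_le_mul_of_nonneg_left haux (by positivity)
      _ = ((b - a) / 2) ^ (k + 1) * (2 * V) /
            (π * ∏ i ∈ Finset.range (k + 1), ((j : ℝ) + 2 * i - k)) := by
          field_simp
  constructor <;> intro hk <;> subst hk
  · have hPeq : (∏ i ∈ Finset.range (2 * s + 1), ((j : ℝ) + 2 * i - 2 * s))
        = ∏ i ∈ Finset.range (2 * s + 1), ((j : ℝ) + 2 * i - ((2 * s : ℕ) : ℝ)) :=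
      Finset.prod_congr rfl fun i _ => by push_cast; ring
    rw [hPeq]
    exact hmain
  · have hPeq : (∏ i ∈ Finset.range (2 * s + 2), ((j : ℝ) + 2 * i - 2 * s - 1))
        = ∏ i ∈ Finset.range (2 * s + 1 + 1), ((j : ℝ) + 2 * i - ((2 * s + 1 : ℕ) : ℝ)) :=
      Finset.prod_congr (by ring_nf) fun i _ => by push_cast; ring
    rw [hPeq]
    exact hmain
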